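/- Let X = X₁ × ⋯ × X_n with X_i = {0,1,…,|X_i|−1}, |X_i| ≥ 2, and let Λ be an inclusion-closed family of subsets of [n]. Define the matrix A with columns indexed by x ∈ X and rows indexed by the set {∅} ∪ {(λ, x̃_λ) : λ ∈ Λ∖{∅}, x̃_λ ∈ ∏_{i∈λ}(X_i∖{0})}, with entries A_{∅,x} = 1 for all x, and A_{(λ,x̃_λ),x} = 1 if x_λ = x̃_λ and 0 otherwise. Then the row span of A equals V_Λ(X), and rank A = dim V_Λ(X) = 1 + ∑_{λ∈Λ∖{∅}} ∏_{i∈λ}(|X_i|−1). -/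

import Mathlib

open scoped Classical BigOperators

/-- `V_Λ(X)`: the span of all functions on `X = ∏ i, X_i` that depend only on the
coordinates `x_λ` for some `λ ∈ Λ`. -/
noncomputable def VLam (n : ℕ) (q : Fin n → ℕ) (Λ : Finset (Finset (Fin n))) :
    Submodule ℝ ((∀ i, Fin (q i)) → ℝ) :=
  Submodule.span ℝ
    {f : (∀ i, Fin (q i)) → ℝ | ∃ s ∈ Λ,
      ∀ x x' : ∀ i, Fin (q i), (∀ i ∈ s, x i = x' i) → f x = f x'}

/-- Row indices of the canonical sufficient statistics matrix of the hierarchical model: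
pairs `(λ, x̃)` with `λ ∈ Λ` and `x̃` nonzero on `λ` (the value of `x̃` off `λ` is
irrelevant; `λ = ∅` gives the all-ones row). -/
def RowIdx (n : ℕ) (q : Fin n → ℕ) (Λ : Finset (Finset (Fin n))) : Type _ :=
  {p : Finset (Fin n) × (∀ i, Fin (q i)) // p.1 ∈ Λ ∧ ∀ i ∈ p.1, (p.2 i).val ≠ 0}

noncomputable instance (n : ℕ) (q : Fin n → ℕ) (Λ : Finset (Finset (Fin n))) :
    Fintype (RowIdx n q Λ) := by
  unfold RowIdx; infer_instance

section Helpers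

variable {n : ℕ} {q : Fin n → ℕ}

/-- The indicator function of `{x : x_s = y_s}`. -/
noncomputable def deltaFn (s : Finset (Fin n)) (y : ∀ i, Fin (q i)) :
    (∀ i, Fin (q i)) → ℝ :=
  fun x => if ∀ i ∈ s, x i = y i then 1 else 0

/-- The support of a tuple. -/
noncomputable def suppF (y : ∀ i, Fin (q i)) : Finset (Fin n) :=
  Finset.univ.filter fun i => (y i).val ≠ 0

lemma fin_val_zero_iff {m : ℕ} [NeZero m] (b : Fin m) : b.val = 0 ↔ b = 0 :=
  ⟨fun h => Fin.ext (by simp [h]), fun h => by simp [h]⟩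

lemma deltaFn_congr {s : Finset (Fin n)} {y y' : ∀ i, Fin (q i)}
    (h : ∀ i ∈ s, y i = y' i) : deltaFn s y = deltaFn s y' := by
  funext x
  simp only [deltaFn]
  have : (∀ i ∈ s, x i = y i) ↔ (∀ i ∈ s, x i = y' i) :=
    ⟨fun h' i hi => (h' i hi).trans (h i hi),
     fun h' i hi => (h' i hi).trans (h i hi).symm⟩
  simp only [this]

lemma deltaFn_expand {s : Finset (Fin n)} {y : ∀ i, Fin (q i)} {i : Fin n}
    (hi : i ∈ s) (hyi : (y i).val = 0) :
    deltaFn s y = deltaFn (s.erase i) y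
      - ∑ a ∈ Finset.univ.filter (fun a : Fin (q i) => a.val ≠ 0),
          deltaFn s (Function.update y i a) := by
  funext x
  simp only [Pi.sub_apply, Finset.sum_apply, deltaFn]
  by_cases hx : ∀ j ∈ s.erase i, x j = y j
  · have h1 : (∀ j ∈ s, x j = y j) ↔ x i = y i := by
      constructor
      · exact fun h => h i hi
      · intro h j hj
        by_cases hji : j = i
        · subst hji; exact h
        · exact hx j (Finset.mem_erase.mpr ⟨hji, hj⟩)
    have h2 : ∀ a : Fin (q i), (∀ j ∈ s, x j = Function.update y i a j) ↔ x i = a := by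
      intro a
      constructor
      · intro h
        have := h i hi
        rwa [Function.update_self] at this
      · intro h j hj
        by_cases hji : j = i
        · subst hji; rwa [Function.update_self]
        · rw [Function.update_of_ne hji]
          exact hx j (Finset.mem_erase.mpr ⟨hji, hj⟩)
    simp only [h1, h2, if_pos hx]
    have hsum : (∑ a ∈ Finset.univ.filter (fun a : Fin (q i) => a.val ≠ 0),
        (if x i = a then (1:ℝ) else 0)) = if (x i).val ≠ 0 then 1 else 0 := by
      rw [Finset.sum_ite_eq]
      simp [Finset.mem_filter]
    rw [hsum]
    have h3 : x i = y i ↔ (x i).val = 0 :=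
      ⟨fun h => h ▸ hyi, fun h => Fin.val_injective (h.trans hyi.symm)⟩
    by_cases hx0 : (x i).val = 0 <;> simp [h3, hx0]
  · have h0 : ¬ (∀ j ∈ s, x j = y j) :=
      fun h => hx fun j hj => h j (Finset.mem_of_mem_erase hj)
    rw [if_neg h0, if_neg hx]
    have hz : (∑ a ∈ Finset.univ.filter (fun a : Fin (q i) => a.val ≠ 0),
        (if ∀ j ∈ s, x j = Function.update y i a j then (1:ℝ) else 0)) = 0 := by
      apply Finset.sum_eq_zero
      intro a _
      refine if_neg fun h => hx fun j hj => ?_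
      have hji : j ≠ i := (Finset.mem_erase.mp hj).1
      have := h j (Finset.mem_of_mem_erase hj)
      rwa [Function.update_of_ne hji] at this
    rw [hz, sub_zero]

lemma deltaFn_supp_linearIndependent (Λ : Finset (Finset (Fin n))) :
    LinearIndependent ℝ (fun y : {y : ∀ i, Fin (q i) // suppF y ∈ Λ} =>
      deltaFn (suppF y.1) y.1) := by
  rw [Fintype.linearIndependent_iff]
  intro c hc
  suffices H : ∀ m (y : {y : ∀ i, Fin (q i) // suppF y ∈ Λ}),
      (suppF y.1).card < m → c y = 0 by
    intro y; exact H ((suppF y.1).card + 1) y (Nat.lt_succ_self _)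
  intro m
  induction m with
  | zero => intro y hy; omega
  | succ m IH =>
    intro y hy
    have h0 := congrFun hc y.1
    simp only [Finset.sum_apply, Pi.smul_apply, smul_eq_mul, Pi.zero_apply, deltaFn] at h0
    rw [Finset.sum_eq_single y] at h0
    · simpa using h0
    · intro z _ hzy
      by_cases hz : ∀ i ∈ suppF z.1, y.1 i = z.1 i
      · have hsub : suppF z.1 ⊆ suppF y.1 := by
          intro i hiz
          have h1 : (z.1 i).val ≠ 0 := (Finset.mem_filter.mp hiz).2
          have h2 := hz i hiz
          exact Finset.mem_filter.mpr ⟨Finset.mem_univ _, by rw [h2]; exact h1⟩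
        have hne : suppF z.1 ≠ suppF y.1 := by
          intro he
          apply hzy
          apply Subtype.ext
          funext i
          by_cases hiz : i ∈ suppF z.1
          · exact (hz i hiz).symm
          · have h1 : (z.1 i).val = 0 := by
              by_contra h
              exact hiz (Finset.mem_filter.mpr ⟨Finset.mem_univ _, h⟩)
            have h2 : (y.1 i).val = 0 := by
              by_contra h
              exact hiz (he ▸ Finset.mem_filter.mpr ⟨Finset.mem_univ _, h⟩)
            exact Fin.val_injective (h1.trans h2.symm)
        have hlt : (suppF z.1).card < (suppF y.1).card :=
          Finset.card_lt_card (ssubset_of_subset_of_ne hsub hne)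
        have := IH z (by omega)
        rw [this, zero_mul]
      · rw [if_neg hz, mul_zero]
    · intro h
      exact absurd (Finset.mem_univ y) h

end Helpers

/-- The 0/1 matrix `A` with the all-ones row (index `λ = ∅`) and rows
`A_{(λ,x̃_λ),x} = 1` iff `x_λ = x̃_λ` (for `λ ∈ Λ∖{∅}`, `x̃_λ` with nonzero entries) has
row span `V_Λ(X)`, and `rank A = dim V_Λ(X) = 1 + ∑_{λ∈Λ∖{∅}} ∏_{i∈λ}(|X_i|−1)`. -/
theorem hierarchical_suff_stat_row_span_and_rank
    (n : ℕ) (q : Fin n → ℕ) (hq : ∀ i, 2 ≤ q i)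
    (Λ : Finset (Finset (Fin n))) (hempty : ∅ ∈ Λ)
    (hΛ : ∀ s ∈ Λ, ∀ t ⊆ s, t ∈ Λ)
    (A : Matrix (RowIdx n q Λ) (∀ i, Fin (q i)) ℝ)
    (hA : ∀ (r : RowIdx n q Λ) (x : ∀ i, Fin (q i)),
      A r x = if ∀ i ∈ r.1.1, x i = r.1.2 i then 1 else 0) :
    Submodule.span ℝ (Set.range A) = VLam n q Λ ∧
    A.rank = Module.finrank ℝ (VLam n q Λ) ∧
    Module.finrank ℝ (VLam n q Λ) = 1 + ∑ s ∈ Λ.erase ∅, ∏ i ∈ s, (q i - 1) := by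
  haveI : ∀ i, NeZero (q i) := fun i => ⟨by have := hq i; omega⟩
  have hAd : ∀ r : RowIdx n q Λ, A r = deltaFn r.1.1 r.1.2 := by
    intro r; funext x; rw [hA]; rfl
  -- all deltas lie in the row span
  have key : ∀ m (s : Finset (Fin n)), s ∈ Λ → ∀ y : ∀ i, Fin (q i),
      s.card + (s.filter fun i => (y i).val = 0).card ≤ m →
      deltaFn s y ∈ Submodule.span ℝ (Set.range A) := by
    intro m
    induction m with
    | zero =>
      intro s hs y hm
      have hs0 : s = ∅ := Finset.card_eq_zero.mp (by omega)
      subst hs0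
      exact Submodule.subset_span ⟨⟨(∅, y), hempty, by simp⟩, hAd _⟩
    | succ m IH =>
      intro s hs y hm
      by_cases hz : ∀ i ∈ s, (y i).val ≠ 0
      · exact Submodule.subset_span ⟨⟨(s, y), hs, hz⟩, hAd _⟩
      · push_neg at hz
        obtain ⟨i, hi, hyi⟩ := hz
        have hyi : (y i).val = 0 := by simpa using hyi
        have hicard : i ∈ s.filter (fun j => (y j).val = 0) :=
          Finset.mem_filter.mpr ⟨hi, hyi⟩
        rw [deltaFn_expand hi hyi]
        refine sub_mem ?_ (Submodule.sum_mem _ ?_)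
        · apply IH _ (hΛ s hs _ (Finset.erase_subset i s)) y
          have h1 : ((s.erase i).filter fun j => (y j).val = 0).card
              ≤ (s.filter fun j => (y j).val = 0).card :=
            Finset.card_le_card (Finset.filter_subset_filter _ (Finset.erase_subset i s))
          have h2 : (s.erase i).card = s.card - 1 := Finset.card_erase_of_mem hi
          have h3 : 1 ≤ s.card := Finset.card_pos.mpr ⟨i, hi⟩
          omega
        · intro a ha
          have ha' : a.val ≠ 0 := (Finset.mem_filter.mp ha).2
          apply IH _ hs
          have hsub : (s.filter fun j => ((Function.update y i a) j).val = 0)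
              ⊆ (s.filter fun j => (y j).val = 0).erase i := by
            intro j hj
            obtain ⟨hj1, hj2⟩ := Finset.mem_filter.mp hj
            have hji : j ≠ i := by
              intro h; subst h
              rw [Function.update_self] at hj2
              exact ha' hj2
            rw [Function.update_of_ne hji] at hj2
            exact Finset.mem_erase.mpr ⟨hji, Finset.mem_filter.mpr ⟨hj1, hj2⟩⟩
          have h1 := Finset.card_le_card hsub
          rw [Finset.card_erase_of_mem hicard] at h1
          have h4 : 1 ≤ (s.filter fun j => (y j).val = 0).card :=
            Finset.card_pos.mpr ⟨i, hicard⟩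
          omega
  -- Part 1: row span equals VLam
  have hspan : Submodule.span ℝ (Set.range A) = VLam n q Λ := by
    apply le_antisymm
    · rw [Submodule.span_le]
      rintro _ ⟨r, rfl⟩
      apply Submodule.subset_span
      refine ⟨r.1.1, r.2.1, fun x x' hxx => ?_⟩
      have : (∀ i ∈ r.1.1, x i = r.1.2 i) ↔ (∀ i ∈ r.1.1, x' i = r.1.2 i) :=
        ⟨fun h i hi => (hxx i hi).symm.trans (h i hi),
         fun h i hi => (hxx i hi).trans (h i hi)⟩
      simp only [hA, this]
    · rw [VLam, Submodule.span_le]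
      rintro f ⟨s, hs, hf⟩
      have hrep : f = ∑ y ∈ Finset.univ.filter
          (fun y : ∀ i, Fin (q i) => ∀ i ∉ s, (y i).val = 0),
          f y • deltaFn s y := by
        funext x
        rw [Finset.sum_apply]
        simp only [Pi.smul_apply, smul_eq_mul, deltaFn]
        set y0 : ∀ i, Fin (q i) := fun i => if i ∈ s then x i else 0 with hy0
        rw [Finset.sum_eq_single y0]
        · have hcond : ∀ i ∈ s, x i = y0 i := fun i hi => (if_pos hi).symm
          rw [if_pos hcond, mul_one]
          exact hf x y0 hcond
        · intro z hz hzy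
          have hz' := (Finset.mem_filter.mp hz).2
          refine mul_eq_zero_of_right _ (if_neg fun h => hzy ?_)
          funext i
          by_cases hi : i ∈ s
          · rw [hy0]
            simp only [if_pos hi]
            exact (h i hi).symm
          · have h1 : (z i).val = 0 := hz' i hi
            have h2 : (y0 i).val = 0 := by rw [hy0]; simp [hi]
            exact Fin.val_injective (h1.trans h2.symm)
        · intro h
          exfalso
          apply h
          refine Finset.mem_filter.mpr ⟨Finset.mem_univ _, fun i hi => ?_⟩
          rw [hy0]; simp [hi]
      rw [hrep]
      exact Submodule.sum_mem _ fun y _ =>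
        Submodule.smul_mem _ _ (key _ s hs y le_rfl)
  refine ⟨hspan, ?_, ?_⟩
  · rw [Matrix.rank_eq_finrank_span_row]; show Module.finrank ℝ (Submodule.span ℝ (Set.range A)) = _; rw [hspan]
  -- Part 3: dimension count
  have hind := deltaFn_supp_linearIndependent (q := q) Λ
  have hgspan : Submodule.span ℝ (Set.range fun y : {y : ∀ i, Fin (q i) // suppF y ∈ Λ} =>
      deltaFn (suppF y.1) y.1) = VLam n q Λ := by
    apply le_antisymm
    · rw [Submodule.span_le]
      rintro _ ⟨y, rfl⟩
      apply Submodule.subset_span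
      refine ⟨suppF y.1, y.2, fun x x' hxx => ?_⟩
      simp only [deltaFn]
      have : (∀ i ∈ suppF y.1, x i = y.1 i) ↔ (∀ i ∈ suppF y.1, x' i = y.1 i) :=
        ⟨fun h i hi => (hxx i hi).symm.trans (h i hi),
         fun h i hi => (hxx i hi).trans (h i hi)⟩
      simp only [this]
    · rw [← hspan, Submodule.span_le]
      rintro _ ⟨r, rfl⟩
      set y0 : ∀ i, Fin (q i) := fun i => if i ∈ r.1.1 then r.1.2 i else 0 with hy0
      have hsupp : suppF y0 = r.1.1 := by
        ext i
        simp only [suppF, Finset.mem_filter, Finset.mem_univ, true_and, hy0]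
        by_cases hi : i ∈ r.1.1
        · simp [hi, r.2.2 i hi]
        · simp [hi]
      apply Submodule.subset_span
      refine ⟨⟨y0, hsupp ▸ r.2.1⟩, ?_⟩
      rw [hAd r]
      show deltaFn (suppF y0) y0 = deltaFn r.1.1 r.1.2
      rw [hsupp]
      exact deltaFn_congr fun i hi => by rw [hy0]; simp [hi]
  have hfr : Module.finrank ℝ (VLam n q Λ) =
      Fintype.card {y : ∀ i, Fin (q i) // suppF y ∈ Λ} := by
    rw [← hgspan, finrank_span_eq_card hind]
  rw [hfr]
  have hcard : Fintype.card {y : ∀ i, Fin (q i) // suppF y ∈ Λ} =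
      ∑ t ∈ Λ, ∏ i ∈ t, (q i - 1) := by
    rw [Fintype.card_subtype]
    rw [Finset.card_eq_sum_card_fiberwise
      (s := Finset.univ.filter fun y : ∀ i, Fin (q i) => suppF y ∈ Λ) (f := suppF) (t := Λ) (fun y hy => (Finset.mem_filter.mp hy).2)]
    apply Finset.sum_congr rfl
    intro t ht
    have hfe : (Finset.univ.filter fun y : ∀ i, Fin (q i) => suppF y ∈ Λ).filter
        (fun y => suppF y = t) = Finset.univ.filter (fun y => suppF y = t) := by
      ext y
      simp only [Finset.mem_filter, Finset.mem_univ, true_and]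
      constructor
      · exact fun h => h.2
      · exact fun h => ⟨h ▸ ht, h⟩
    rw [hfe, ← Fintype.card_subtype]
    -- card of tuples with support exactly t
    have e1 : ∀ y : ∀ i, Fin (q i), suppF y = t ↔ ∀ i, ((y i).val ≠ 0 ↔ i ∈ t) := by
      intro y
      constructor
      · intro h i
        rw [← h]; simp [suppF]
      · intro h; ext i; simpa [suppF] using h i
    rw [Fintype.card_congr ((Equiv.subtypeEquivRight e1).trans (Equiv.subtypePiEquivPi (β := fun i => Fin (q i)) (p := fun i b => (b.val ≠ 0 ↔ i ∈ t)))),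
      Fintype.card_pi]
    have hfac : ∀ i, Fintype.card {b : Fin (q i) // (b.val ≠ 0 ↔ i ∈ t)}
        = if i ∈ t then q i - 1 else 1 := by
      intro i
      rw [Fintype.card_subtype]
      by_cases hit : i ∈ t
      · have : Finset.univ.filter (fun b : Fin (q i) => (b.val ≠ 0 ↔ i ∈ t)) =
            Finset.univ.erase 0 := by
          ext b
          simp [hit, Finset.mem_erase, fin_val_zero_iff]
        rw [this, if_pos hit, Finset.card_erase_of_mem (Finset.mem_univ _),
          Finset.card_univ, Fintype.card_fin]
      · have : Finset.univ.filter (fun b : Fin (q i) => (b.val ≠ 0 ↔ i ∈ t)) =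
            {0} := by
          ext b
          simp [hit, fin_val_zero_iff]
        rw [this, if_neg hit, Finset.card_singleton]
    simp only [hfac]
    rw [Finset.prod_ite_mem, Finset.univ_inter]
  rw [hcard, ← Finset.add_sum_erase Λ _ hempty, Finset.prod_empty]
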